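/- Let G be a strongly bipartite digraph with no isolated vertices, i.e. every vertex of G has at least one incident arc but no vertex has both an incoming and an outgoing arc. Then the map ψ which sends a TF-automorphism (α,β) of G to the permutation f of V(G) defined by f(u) = α(u) if u has an outgoing arc and f(u) = β(u) if u has an incoming arc, is well defined, and ψ is a surjective group homomorphism from Aut^TF(G) onto Aut(G). -/

import Mathlib

/-- The automorphism group of a mixed graph `(V, A)`, as a subgroup of `Perm V`. -/
def MixedAut {V : Type*} (A : V → V → Prop) : Subgroup (Equiv.Perm V) where
  carrier := {g | ∀ u v, A u v ↔ A (g u) (g v)}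
  one_mem' := by intro u v; simp
  mul_mem' := by
    intro g h hg hh u v
    simpa [Equiv.Perm.mul_apply] using (hh u v).trans (hg (h u) (h v))
  inv_mem' := by
    intro g hg u v
    simpa [Equiv.Perm.coe_inv, Equiv.apply_symm_apply] using (hg (g⁻¹ u) (g⁻¹ v)).symm

/-- The two-fold automorphism group of a mixed graph `(V, A)`, as a subgroup of
`Perm V × Perm V` (with componentwise composition). -/
def TFAut {V : Type*} (A : V → V → Prop) : Subgroup (Equiv.Perm V × Equiv.Perm V) where
  carrier := {p | ∀ u v, A u v ↔ A (p.1 u) (p.2 v)}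
  one_mem' := by intro u v; simp
  mul_mem' := by
    intro p q hp hq u v
    simpa [Prod.fst_mul, Prod.snd_mul, Equiv.Perm.mul_apply] using
      (hq u v).trans (hp (q.1 u) (q.2 v))
  inv_mem' := by
    intro p hp u v
    simpa [Prod.fst_inv, Prod.snd_inv, Equiv.Perm.coe_inv, Equiv.apply_symm_apply] using
      (hp (p.1⁻¹ u) (p.2⁻¹ v)).symm

section Aux

open Classical in
/-- The underlying function of ψ p. -/
noncomputable def tfFun {V : Type*} (A : V → V → Prop) (p : Equiv.Perm V × Equiv.Perm V) :
    V → V := fun u => if ∃ y, A u y then p.1 u else p.2 u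

theorem tfFun_out {V : Type*} (A : V → V → Prop) (p : Equiv.Perm V × Equiv.Perm V)
    {u : V} (h : ∃ y, A u y) : tfFun A p u = p.1 u := by simp [tfFun, h]

theorem tfFun_not_out {V : Type*} (A : V → V → Prop) (p : Equiv.Perm V × Equiv.Perm V)
    {u : V} (h : ¬ ∃ y, A u y) : tfFun A p u = p.2 u := by simp [tfFun, h]

variable {V : Type*} {A : V → V → Prop}

theorem out_map {p : Equiv.Perm V × Equiv.Perm V} (hp : p ∈ TFAut A)
    {u : V} (h : ∃ y, A u y) : ∃ y, A (p.1 u) y := by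
  obtain ⟨y, hy⟩ := h
  exact ⟨p.2 y, (hp u y).mp hy⟩

theorem in_map {p : Equiv.Perm V × Equiv.Perm V} (hp : p ∈ TFAut A)
    {u : V} (h : ∃ x, A x u) : ∃ x, A x (p.2 u) := by
  obtain ⟨x, hx⟩ := h
  exact ⟨p.1 x, (hp x u).mp hx⟩

theorem out_iff {p : Equiv.Perm V × Equiv.Perm V} (hp : p ∈ TFAut A)
    (hsb : ∀ w, ¬ ((∃ x, A x w) ∧ (∃ y, A w y)))
    (hni : ∀ w, (∃ x, A x w) ∨ (∃ y, A w y))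
    (u : V) : (∃ y, A (tfFun A p u) y) ↔ (∃ y, A u y) := by
  by_cases h : ∃ y, A u y
  · rw [tfFun_out A p h]
    exact ⟨fun _ => h, fun _ => out_map hp h⟩
  · rw [tfFun_not_out A p h]
    have hin : ∃ x, A x u := (hni u).resolve_right h
    have : ∃ x, A x (p.2 u) := in_map hp hin
    constructor
    · intro hout; exact absurd ⟨this, hout⟩ (hsb _)
    · intro hout; exact absurd hout h

theorem tfFun_inv {p : Equiv.Perm V × Equiv.Perm V} (hp : p ∈ TFAut A)
    (hsb : ∀ w, ¬ ((∃ x, A x w) ∧ (∃ y, A w y)))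
    (hni : ∀ w, (∃ x, A x w) ∨ (∃ y, A w y))
    (u : V) : tfFun A p⁻¹ (tfFun A p u) = u := by
  by_cases h : ∃ y, A u y
  · have h1 : ∃ y, A (tfFun A p u) y := (out_iff hp hsb hni u).mpr h
    rw [tfFun_out A _ h1, tfFun_out A p h]
    simp
  · have h1 : ¬ ∃ y, A (tfFun A p u) y := fun h2 => h ((out_iff hp hsb hni u).mp h2)
    rw [tfFun_not_out A _ h1, tfFun_not_out A p h]
    simp

end Aux

theorem stmt_17 {V : Type*} (A : V → V → Prop)
    (hsb : ∀ w, ¬ ((∃ x, A x w) ∧ (∃ y, A w y)))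
    (hni : ∀ w, (∃ x, A x w) ∨ (∃ y, A w y)) :
    ∃ ψ : TFAut A →* Equiv.Perm V,
      (∀ p : TFAut A, ∀ u : V,
        ((∃ y, A u y) → ψ p u = (p : Equiv.Perm V × Equiv.Perm V).1 u) ∧
        ((∃ x, A x u) → ψ p u = (p : Equiv.Perm V × Equiv.Perm V).2 u)) ∧
      ψ.range = MixedAut A := by
  classical
  set Ψ : TFAut A → Equiv.Perm V := fun p =>
    { toFun := tfFun A (p : Equiv.Perm V × Equiv.Perm V)
      invFun := tfFun A (p : Equiv.Perm V × Equiv.Perm V)⁻¹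
      left_inv := fun u => tfFun_inv p.2 hsb hni u
      right_inv := fun u => by
        have := tfFun_inv (p⁻¹).2 hsb hni u
        simpa using this } with hΨ
  have hmul : ∀ p q : TFAut A, Ψ (p * q) = Ψ p * Ψ q := by
    intro p q
    ext u
    simp only [hΨ, Equiv.coe_fn_mk, Equiv.Perm.mul_apply]
    by_cases h : ∃ y, A u y
    · rw [tfFun_out A _ h, tfFun_out A _ h,
        tfFun_out A (↑p : Equiv.Perm V × Equiv.Perm V) (out_map q.2 h)]
      rfl
    · have hq : ¬ ∃ y, A ((q : Equiv.Perm V × Equiv.Perm V).2 u) y := by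
        intro h2
        have hin : ∃ x, A x u := (hni u).resolve_right h
        exact (hsb _) ⟨in_map q.2 hin, h2⟩
      rw [tfFun_not_out A _ h, tfFun_not_out A _ h, tfFun_not_out A _ hq]
      rfl
  refine ⟨MonoidHom.mk' Ψ hmul, ?_, ?_⟩
  · intro p u
    constructor
    · intro h; exact tfFun_out A _ h
    · intro h
      have hno : ¬ ∃ y, A u y := fun h2 => (hsb u) ⟨h, h2⟩
      exact tfFun_not_out A _ hno
  · ext g
    simp only [MonoidHom.mem_range, MonoidHom.mk'_apply]
    constructor
    · rintro ⟨p, rfl⟩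
      intro u v
      by_cases huv : A u v
      · have hu : ∃ y, A u y := ⟨v, huv⟩
        have hv : ∃ x, A x v := ⟨u, huv⟩
        have hvno : ¬ ∃ y, A v y := fun h2 => (hsb v) ⟨hv, h2⟩
        simp only [hΨ, Equiv.coe_fn_mk]
        rw [tfFun_out A _ hu, tfFun_not_out A _ hvno]
        exact ⟨fun _ => (p.2 u v).mp huv, fun _ => huv⟩
      · constructor
        · intro h; exact absurd h huv
        · intro h
          exfalso
          simp only [hΨ, Equiv.coe_fn_mk] at h
          by_cases hu : ∃ y, A u y
          · rw [tfFun_out A _ hu] at h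
            by_cases hv : ∃ x, A x v
            · have hvno : ¬ ∃ y, A v y := fun h2 => (hsb v) ⟨hv, h2⟩
              rw [tfFun_not_out A _ hvno] at h
              exact huv ((p.2 u v).mpr h)
            · have hvo : ∃ y, A v y := (hni v).resolve_left hv
              rw [tfFun_out A _ hvo] at h
              have : ∃ x, A x ((p : Equiv.Perm V × Equiv.Perm V).1 v) := ⟨_, h⟩
              exact (hsb _) ⟨this, out_map p.2 hvo⟩
          · have hui : ∃ x, A x u := (hni u).resolve_right hu
            rw [tfFun_not_out A _ hu] at h
            exact (hsb _) ⟨in_map p.2 hui, ⟨_, h⟩⟩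
    · intro hg
      have hgg : ((g, g) : Equiv.Perm V × Equiv.Perm V) ∈ TFAut A := hg
      refine ⟨⟨(g, g), hgg⟩, ?_⟩
      ext u
      simp only [hΨ, Equiv.coe_fn_mk]
      by_cases h : ∃ y, A u y
      · rw [tfFun_out A _ h]
      · rw [tfFun_not_out A _ h]
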